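/- Let 𝕂 be a field equipped with a non-Archimedean absolute value and let G be a finite group of order n, with the discrete topology. If the image (n : 𝕂) of n in 𝕂 is nonzero (equivalently, char 𝕂 does not divide n), then the map m₀ : C_b(G,𝕂) → 𝕂 defined by m₀(f) = (n : 𝕂)⁻¹ · Σ_{g ∈ G} f(g) is the unique left-invariant normed 𝕂-mean on G, and its operator norm equals ‖(n : 𝕂)‖⁻¹. If the image of n in 𝕂 is zero, then G admits no left-invariant normed 𝕂-mean. -/

import Mathlib

open BoundedContinuousFunction

/-- The left translate of a bounded continuous function: `(leftTranslate 𝕂 g f) x = f (g⁻¹ * x)`. -/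
noncomputable def leftTranslate {G : Type*} [Group G] [TopologicalSpace G] [IsTopologicalGroup G]
    (𝕂 : Type*) [NormedField 𝕂] (g : G) (f : G →ᵇ 𝕂) : G →ᵇ 𝕂 :=
  f.compContinuous ⟨fun x => g⁻¹ * x, continuous_mul_left g⁻¹⟩

/-- `m` is a left-invariant normed `𝕂`-mean on `G`: a bounded (equivalently, continuous)
linear functional on the space of bounded continuous `𝕂`-valued functions on `G`, sending the
constant function `𝟙_G` to `1`, and invariant under left translation. -/
def IsInvariantMean (𝕂 : Type*) [NormedField 𝕂] (G : Type*) [Group G] [TopologicalSpace G]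
    [IsTopologicalGroup G] (m : (G →ᵇ 𝕂) →ₗ[𝕂] 𝕂) : Prop :=
  (∃ C : ℝ, ∀ f : G →ᵇ 𝕂, ‖m f‖ ≤ C * ‖f‖) ∧
    m (BoundedContinuousFunction.const G (1 : 𝕂)) = 1 ∧
    ∀ (g : G) (f : G →ᵇ 𝕂), m (leftTranslate 𝕂 g f) = m f

/-- The operator norm of the linear functional `m` is at most `C`. -/
def MeanNormLE (𝕂 : Type*) [NormedField 𝕂] (G : Type*) [Group G] [TopologicalSpace G]
    [IsTopologicalGroup G] (m : (G →ᵇ 𝕂) →ₗ[𝕂] 𝕂) (C : ℝ) : Prop :=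
  ∀ f : G →ᵇ 𝕂, ‖m f‖ ≤ C * ‖f‖

/-- For a finite (discrete) group `G` of order `n` and a non-Archimedean
valued field `𝕂`: if `(n : 𝕂) ≠ 0` then the averaging functional is the unique left-invariant
normed `𝕂`-mean on `G` and its operator norm equals `‖(n : 𝕂)‖⁻¹`; if `(n : 𝕂) = 0` then `G`
admits no left-invariant normed `𝕂`-mean. -/
theorem sum_leftTranslate_apply {𝕂 : Type*} [NormedField 𝕂]
    {G : Type*} [Group G] [Fintype G] [TopologicalSpace G] [IsTopologicalGroup G]
    (g : G) (f : G →ᵇ 𝕂) : ∑ x : G, (leftTranslate 𝕂 g f) x = ∑ x : G, f x := by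
  exact Fintype.sum_equiv (Equiv.mulLeft g⁻¹) _ _ (fun x => rfl)

theorem key_const {𝕂 : Type*} [NormedField 𝕂]
    {G : Type*} [Group G] [Fintype G] [TopologicalSpace G] [DiscreteTopology G]
    [IsTopologicalGroup G] (f : G →ᵇ 𝕂) :
    ∑ g : G, leftTranslate 𝕂 g f = BoundedContinuousFunction.const G (∑ g : G, f g) := by
  ext x
  rw [BoundedContinuousFunction.coe_sum]
  simp only [Finset.sum_apply, BoundedContinuousFunction.const_apply]
  show ∑ g : G, f (g⁻¹ * x) = _
  exact Fintype.sum_equiv (Equiv.trans (Equiv.inv G) (Equiv.mulRight x)) _ _ (fun g => rfl)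

theorem invariantMean_of_finite_group (𝕂 : Type*) [NormedField 𝕂] [IsUltrametricDist 𝕂]
    (G : Type*) [Group G] [Fintype G] [TopologicalSpace G] [DiscreteTopology G]
    [IsTopologicalGroup G] :
    (((Fintype.card G : 𝕂) ≠ 0) →
      ∃ m : (G →ᵇ 𝕂) →ₗ[𝕂] 𝕂, IsInvariantMean 𝕂 G m ∧
        (∀ f : G →ᵇ 𝕂, m f = (Fintype.card G : 𝕂)⁻¹ * ∑ g : G, f g) ∧
        MeanNormLE 𝕂 G m (‖(Fintype.card G : 𝕂)‖⁻¹) ∧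
        (∀ C : ℝ, MeanNormLE 𝕂 G m C → ‖(Fintype.card G : 𝕂)‖⁻¹ ≤ C) ∧
        (∀ m' : (G →ᵇ 𝕂) →ₗ[𝕂] 𝕂, IsInvariantMean 𝕂 G m' → m' = m)) ∧
    (((Fintype.card G : 𝕂) = 0) →
      ¬ ∃ m : (G →ᵇ 𝕂) →ₗ[𝕂] 𝕂, IsInvariantMean 𝕂 G m) := by
  classical
  set n : 𝕂 := (Fintype.card G : 𝕂) with hn
  -- delta function at 1
  have hone : (1 : G) ∈ Finset.univ := Finset.mem_univ _
  set δ : G →ᵇ 𝕂 := BoundedContinuousFunction.mk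
    ⟨fun x => if x = 1 then 1 else 0, continuous_of_discreteTopology⟩
    ⟨2, fun x y => by
      dsimp
      calc dist (if x = 1 then (1:𝕂) else 0) (if y = 1 then 1 else 0)
          ≤ dist (if x = 1 then (1:𝕂) else 0) 0 + dist (0:𝕂) (if y = 1 then 1 else 0) :=
            dist_triangle _ _ _
        _ ≤ 1 + 1 := by
            gcongr <;> [skip; rw [dist_comm]] <;>
              · split <;> simp [dist_eq_norm]
        _ = 2 := by norm_num⟩ with hδ
  have hδsum : ∑ g : G, δ g = 1 := by
    show ∑ x : G, (if x = 1 then (1:𝕂) else 0) = 1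
    simp
  have hδnorm : ‖δ‖ ≤ 1 := by
    apply BoundedContinuousFunction.norm_le_of_nonempty.mpr
    intro x
    show ‖if x = 1 then (1:𝕂) else 0‖ ≤ 1
    split <;> simp
  -- key uniqueness identity
  have key : ∀ (m' : (G →ᵇ 𝕂) →ₗ[𝕂] 𝕂), IsInvariantMean 𝕂 G m' →
      ∀ f : G →ᵇ 𝕂, n * m' f = ∑ g : G, f g := by
    intro m' ⟨_, hconst, hinv⟩ f
    have h1 : m' (∑ g : G, leftTranslate 𝕂 g f) = ∑ g : G, m' f := by
      rw [map_sum]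
      exact Finset.sum_congr rfl fun g _ => hinv g f
    rw [key_const f] at h1
    have h2 : (BoundedContinuousFunction.const G (∑ g : G, f g)) =
        (∑ g : G, f g) • BoundedContinuousFunction.const G (1 : 𝕂) := by
      ext x; simp
    rw [h2, map_smul, hconst, smul_eq_mul, mul_one] at h1
    rw [h1, Finset.sum_const, Finset.card_univ, nsmul_eq_mul, hn]
  constructor
  · intro hn0
    refine ⟨{ toFun := fun f => n⁻¹ * ∑ g : G, f g
              map_add' := fun f g => by
                simp only [BoundedContinuousFunction.coe_add, Pi.add_apply,
                  Finset.sum_add_distrib, mul_add]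
              map_smul' := fun c f => by
                simp only [BoundedContinuousFunction.coe_smul, Pi.smul_apply, smul_eq_mul,
                  ← Finset.mul_sum, RingHom.id_apply]
                ring }, ?_, ?_, ?_, ?_, ?_⟩
    · refine ⟨⟨‖n‖⁻¹, fun f => ?_⟩, ?_, ?_⟩
      · show ‖n⁻¹ * ∑ g : G, f g‖ ≤ _
        rw [norm_mul, norm_inv]
        exact mul_le_mul_of_nonneg_left
          (IsUltrametricDist.norm_sum_le_of_forall_le_of_nonneg (norm_nonneg f)
            (fun g _ => f.norm_coe_le_norm g)) (by positivity)
      · show n⁻¹ * ∑ g : G, (1:𝕂) = 1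
        rw [Finset.sum_const, Finset.card_univ, nsmul_eq_mul, mul_one, ← hn,
          inv_mul_cancel₀ hn0]
      · intro g f
        show n⁻¹ * ∑ x : G, (leftTranslate 𝕂 g f) x = n⁻¹ * ∑ x : G, f x
        rw [sum_leftTranslate_apply]
    · intro f; rfl
    · intro f
      show ‖n⁻¹ * ∑ g : G, f g‖ ≤ _
      rw [norm_mul, norm_inv]
      exact mul_le_mul_of_nonneg_left
        (IsUltrametricDist.norm_sum_le_of_forall_le_of_nonneg (norm_nonneg f)
          (fun g _ => f.norm_coe_le_norm g)) (by positivity)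
    · intro C hC
      have := hC δ
      have hδval : ‖n⁻¹ * ∑ g : G, δ g‖ = ‖n‖⁻¹ := by
        rw [hδsum, mul_one, norm_inv]
      rw [show ((⟨⟨fun f => n⁻¹ * ∑ g : G, (f : G → 𝕂) g, _⟩, _⟩ : (G →ᵇ 𝕂) →ₗ[𝕂] 𝕂) δ) =
        n⁻¹ * ∑ g : G, δ g from rfl, hδval] at this
      have hCnn : 0 ≤ C := by
        by_contra h
        push_neg at h
        have : C * ‖δ‖ < 0 := by
          rcases lt_or_eq_of_le (norm_nonneg δ) with h' | h'
          · exact mul_neg_of_neg_of_pos h h'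
          · exfalso
            have : δ 1 = 0 := by
              have := BoundedContinuousFunction.norm_coe_le_norm δ 1
              rw [← h'] at this
              simpa using norm_le_zero_iff.mp this
            rw [show δ 1 = (if (1:G) = 1 then (1:𝕂) else 0) from rfl] at this
            simp at this
        have h2 : (0:ℝ) ≤ ‖n‖⁻¹ := by positivity
        linarith [le_trans h2 (le_trans (le_of_eq rfl) ‹‖n‖⁻¹ ≤ C * ‖δ‖›)]
      calc ‖n‖⁻¹ ≤ C * ‖δ‖ := this
        _ ≤ C * 1 := by gcongr
        _ = C := mul_one C
    · intro m' hm'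
      apply LinearMap.ext
      intro f
      have := key m' hm' f
      show m' f = n⁻¹ * ∑ g : G, f g
      field_simp
      linear_combination this
  · intro hn0
    rintro ⟨m, hm⟩
    have := key m hm δ
    rw [hn0, zero_mul, hδsum] at this
    exact zero_ne_one this
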